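/- With the James-space construction below, for every linear functional x* on J_K the L¹ norm of π*(x*) satisfies ‖π*(x*)‖_{L¹(μ)} = |x*|(d) ≤ B·‖x*‖_{J*}, where ‖x*‖_{J*} = sup{|x*(x)| : x ∈ J_K, ‖x‖_J ≤ 1}. -/

import Mathlib

open Filter MeasureTheory

/-- The set of candidate values whose supremum (times `1/√2`) defines the James norm. -/
def jamesSet (x : ℕ → ℝ) : Set ℝ :=
  {r : ℝ | ∃ (m : ℕ) (p : Fin (m + 1) → ℕ), StrictMono p ∧
    r = Real.sqrt ((∑ i : Fin m, (x (p i.castSucc) - x (p i.succ)) ^ 2)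
      + (x (p (Fin.last m)) - x (p 0)) ^ 2)}

/-- The James norm of a sequence. -/
noncomputable def jamesNorm (x : ℕ → ℝ) : ℝ :=
  (Real.sqrt 2)⁻¹ * sSup (jamesSet x)

/-- `d_n = Σ_{j≤n} e_j = (1,…,1,0,…)` with `n+1` leading ones. -/
def dSeq (n : ℕ) : ℕ → ℝ := fun j => if j ≤ n then 1 else 0

/-- `|x| = Σ_{i≤K} |γ*_i(x)|·ω_i`, the lattice absolute value induced by a basis
`ω` with coordinate functionals `γ`. -/
noncomputable def absVec (K : ℕ) (ω : Fin (K + 1) → ℕ → ℝ)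
    (γ : Fin (K + 1) → (ℕ → ℝ) →ₗ[ℝ] ℝ) (x : ℕ → ℝ) : ℕ → ℝ :=
  ∑ i, |γ i x| • ω i

/-- `d = Σ_{j≤K} 2^{−j−1}·|d_j|`. -/
noncomputable def dElt (K : ℕ) (ω : Fin (K + 1) → ℕ → ℝ)
    (γ : Fin (K + 1) → (ℕ → ℝ) →ₗ[ℝ] ℝ) : ℕ → ℝ :=
  ∑ j : Fin (K + 1), ((2 : ℝ) ^ ((j : ℕ) + 1))⁻¹ • absVec K ω γ (dSeq j)

/-- `d* = Σ_{j≤K} 2^{−j−1}·|e*_j|`, as a function on sequences; here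
`|e*_j|(x) = Σ_{i≤K} γ*_i(x)·|e*_j(ω_i)| = Σ_{i≤K} γ*_i(x)·|ω_i(j)|`. -/
noncomputable def dStar (K : ℕ) (ω : Fin (K + 1) → ℕ → ℝ)
    (γ : Fin (K + 1) → (ℕ → ℝ) →ₗ[ℝ] ℝ) (x : ℕ → ℝ) : ℝ :=
  ∑ j : Fin (K + 1), ((2 : ℝ) ^ ((j : ℕ) + 1))⁻¹ * (∑ i, γ i x * |ω i (j : ℕ)|)

/-- The probability measure on `Ω = {0,…,K}` given by
`μ({i}) = γ*_i(d)·d*(ω_i)/d*(d)`. -/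
noncomputable def jMeasure (K : ℕ) (ω : Fin (K + 1) → ℕ → ℝ)
    (γ : Fin (K + 1) → (ℕ → ℝ) →ₗ[ℝ] ℝ) : Measure (Fin (K + 1)) :=
  ∑ i : Fin (K + 1),
    (ENNReal.ofReal (γ i (dElt K ω γ) * dStar K ω γ (ω i) / dStar K ω γ (dElt K ω γ))) •
      Measure.dirac i

/-- The embedding `π : J_K → L¹(Ω,μ)`, `π(x)(i) = (d*(d)/γ*_i(d))·γ*_i(x)`. -/
noncomputable def jPi (K : ℕ) (ω : Fin (K + 1) → ℕ → ℝ)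
    (γ : Fin (K + 1) → (ℕ → ℝ) →ₗ[ℝ] ℝ) (x : ℕ → ℝ) : Fin (K + 1) → ℝ :=
  fun i => (dStar K ω γ (dElt K ω γ) / γ i (dElt K ω γ)) * γ i x

/-- The embedding `π* : J_K* → L¹(Ω,μ)`, `π*(x*)(i) = (d*(d)/d*(ω_i))·x*(ω_i)`. -/
noncomputable def jPiStar (K : ℕ) (ω : Fin (K + 1) → ℕ → ℝ)
    (γ : Fin (K + 1) → (ℕ → ℝ) →ₗ[ℝ] ℝ) (f : (ℕ → ℝ) →ₗ[ℝ] ℝ) : Fin (K + 1) → ℝ :=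
  fun i => (dStar K ω γ (dElt K ω γ) / dStar K ω γ (ω i)) * f (ω i)

/- ### Auxiliary lemmas -/

lemma zero_mem_jamesSet (x : ℕ → ℝ) : (0 : ℝ) ∈ jamesSet x := by
  refine ⟨0, fun _ => 0, ?_, ?_⟩
  · intro a b h
    have h1 := a.2
    have h2 := b.2
    have h3 : (a : ℕ) < b := h
    omega
  · simp

lemma jamesNorm_nonneg (x : ℕ → ℝ) : 0 ≤ jamesNorm x := by
  apply mul_nonneg (inv_nonneg.mpr (Real.sqrt_nonneg 2))
  apply Real.sSup_nonneg
  rintro r ⟨m, p, hp, rfl⟩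
  exact Real.sqrt_nonneg _

lemma fin_telescope {m : ℕ} (a : Fin (m + 1) → ℝ) :
    ∑ i : Fin m, (a i.castSucc - a i.succ) = a 0 - a (Fin.last m) := by
  set h : ℕ → ℝ := fun k => a ⟨min k m, Nat.lt_succ_of_le (min_le_right k m)⟩ with hh
  have key : ∀ i : Fin m, a i.castSucc - a i.succ = h (i : ℕ) - h ((i : ℕ) + 1) := by
    intro i
    have e1 : (⟨min (i : ℕ) m, Nat.lt_succ_of_le (min_le_right _ m)⟩ : Fin (m + 1)) = i.castSucc :=
      Fin.ext (by simp [min_eq_left (le_of_lt i.isLt)])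
    have e2 : (⟨min ((i : ℕ) + 1) m, Nat.lt_succ_of_le (min_le_right _ m)⟩ : Fin (m + 1)) = i.succ :=
      Fin.ext (by simp [min_eq_left (show (i : ℕ) + 1 ≤ m from i.isLt)])
    rw [hh]
    simp only []
    rw [e1, e2]
  rw [Finset.sum_congr rfl (fun i _ => key i)]
  rw [Fin.sum_univ_eq_sum_range (fun k => h k - h (k + 1)) m]
  rw [Finset.sum_range_sub' h m]
  have e0 : (⟨min 0 m, Nat.lt_succ_of_le (min_le_right _ m)⟩ : Fin (m + 1)) = 0 :=
    Fin.ext (by simp)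
  have em : (⟨min m m, Nat.lt_succ_of_le (min_le_right _ m)⟩ : Fin (m + 1)) = Fin.last m :=
    Fin.ext (by simp)
  rw [hh]
  simp only []
  rw [e0, em]

lemma jamesSet_bddAbove {K : ℕ} {x : ℕ → ℝ} (hx : ∀ j, K < j → x j = 0) :
    BddAbove (jamesSet x) := by
  refine ⟨4 * ∑ q ∈ Finset.range (K + 1), |x q|, ?_⟩
  rintro r ⟨m, p, hp, rfl⟩
  set M := ∑ q ∈ Finset.range (K + 1), |x q| with hM
  set a : Fin (m + 1) → ℝ := fun k => x (p k) with ha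
  set T := ∑ k : Fin (m + 1), |a k| with hT
  have hTM : T ≤ M := by
    rw [hT, ha]
    have hinj : ∀ y ∈ Finset.univ, ∀ z ∈ Finset.univ, p y = p z → y = z :=
      fun y _ z _ h => hp.injective h
    rw [← Finset.sum_image (f := fun q => |x q|) hinj]
    set t := Finset.univ.image p with ht
    have h1 : ∑ q ∈ t, |x q| = ∑ q ∈ t ∩ Finset.range (K + 1), |x q| := by
      refine (Finset.sum_subset Finset.inter_subset_left ?_).symm
      intro q hq hq'
      have : K < q := by
        by_contra h
        exact hq' (Finset.mem_inter.mpr ⟨hq, Finset.mem_range.mpr (by omega)⟩)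
      rw [hx q this, abs_zero]
    rw [h1]
    exact Finset.sum_le_sum_of_subset_of_nonneg Finset.inter_subset_right
      (fun q _ _ => abs_nonneg _)
  set A := ∑ i : Fin m, |a i.castSucc - a i.succ| with hA
  have hA0 : 0 ≤ A := Finset.sum_nonneg fun i _ => abs_nonneg _
  have hsq : (∑ i : Fin m, (a i.castSucc - a i.succ) ^ 2) ≤ A ^ 2 := by
    rw [hA]
    have := Finset.sum_sq_le_sq_sum_of_nonneg
      (f := fun i : Fin m => |a i.castSucc - a i.succ|) (s := Finset.univ)
      (fun i _ => abs_nonneg _)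
    simpa [sq_abs] using this
  have hb : |a (Fin.last m) - a 0| ≤ |a (Fin.last m)| + |a 0| := abs_sub _ _
  have hsum_cast : ∑ i : Fin m, |a i.castSucc| ≤ T := by
    rw [hT]
    have hinj : ∀ y ∈ Finset.univ, ∀ z ∈ (Finset.univ : Finset (Fin m)),
        Fin.castSucc y = Fin.castSucc z → y = z :=
      fun y _ z _ h => Fin.castSucc_injective m h
    rw [← Finset.sum_image (f := fun k => |a k|) hinj]
    exact Finset.sum_le_sum_of_subset_of_nonneg (Finset.subset_univ _)
      (fun q _ _ => abs_nonneg _)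
  have hsum_succ : ∑ i : Fin m, |a i.succ| ≤ T := by
    rw [hT]
    have hinj : ∀ y ∈ Finset.univ, ∀ z ∈ (Finset.univ : Finset (Fin m)),
        Fin.succ y = Fin.succ z → y = z :=
      fun y _ z _ h => Fin.succ_injective m h
    rw [← Finset.sum_image (f := fun k => |a k|) hinj]
    exact Finset.sum_le_sum_of_subset_of_nonneg (Finset.subset_univ _)
      (fun q _ _ => abs_nonneg _)
  have hlast : |a (Fin.last m)| ≤ T :=
    Finset.single_le_sum (f := fun k => |a k|) (fun k _ => abs_nonneg _) (Finset.mem_univ _)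
  have h0 : |a 0| ≤ T :=
    Finset.single_le_sum (f := fun k => |a k|) (fun k _ => abs_nonneg _) (Finset.mem_univ _)
  have hAT : A ≤ 2 * T := by
    rw [hA]
    calc ∑ i : Fin m, |a i.castSucc - a i.succ|
        ≤ ∑ i : Fin m, (|a i.castSucc| + |a i.succ|) :=
          Finset.sum_le_sum fun i _ => abs_sub _ _
      _ = (∑ i : Fin m, |a i.castSucc|) + ∑ i : Fin m, |a i.succ| := Finset.sum_add_distrib
      _ ≤ T + T := add_le_add hsum_cast hsum_succ
      _ = 2 * T := by ring
  have hTnonneg : 0 ≤ T := Finset.sum_nonneg fun k _ => abs_nonneg _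
  have step1 : (∑ i : Fin m, (a i.castSucc - a i.succ) ^ 2) + (a (Fin.last m) - a 0) ^ 2
      ≤ (A + |a (Fin.last m) - a 0|) ^ 2 := by
    nlinarith [sq_abs (a (Fin.last m) - a 0), abs_nonneg (a (Fin.last m) - a 0)]
  calc Real.sqrt ((∑ i : Fin m, (x (p i.castSucc) - x (p i.succ)) ^ 2)
        + (x (p (Fin.last m)) - x (p 0)) ^ 2)
      = Real.sqrt ((∑ i : Fin m, (a i.castSucc - a i.succ) ^ 2)
        + (a (Fin.last m) - a 0) ^ 2) := rfl
    _ ≤ Real.sqrt ((A + |a (Fin.last m) - a 0|) ^ 2) := Real.sqrt_le_sqrt step1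
    _ = A + |a (Fin.last m) - a 0| :=
        Real.sqrt_sq (by positivity)
    _ ≤ 2 * T + (T + T) := add_le_add hAT (hb.trans (add_le_add hlast h0))
    _ = 4 * T := by ring
    _ ≤ 4 * M := by linarith

lemma jamesNorm_zero : jamesNorm (0 : ℕ → ℝ) = 0 := by
  have h1 : sSup (jamesSet (0 : ℕ → ℝ)) ≤ 0 := by
    apply csSup_le ⟨0, zero_mem_jamesSet _⟩
    rintro r ⟨m, p, hp, rfl⟩
    simp
  have h2 : 0 ≤ sSup (jamesSet (0 : ℕ → ℝ)) := by
    apply Real.sSup_nonneg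
    rintro r ⟨m, p, hp, rfl⟩
    exact Real.sqrt_nonneg _
  unfold jamesNorm
  rw [le_antisymm h1 h2, mul_zero]

lemma jamesNorm_dSeq_le (n : ℕ) : jamesNorm (dSeq n) ≤ 1 := by
  have h2 : (0 : ℝ) < Real.sqrt 2 := Real.sqrt_pos.mpr (by norm_num)
  have hsup : sSup (jamesSet (dSeq n)) ≤ Real.sqrt 2 := by
    apply csSup_le ⟨0, zero_mem_jamesSet _⟩
    rintro r ⟨m, p, hp, rfl⟩
    set a : Fin (m + 1) → ℝ := fun k => dSeq n (p k) with ha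
    have ha01 : ∀ k, a k = 0 ∨ a k = 1 := by
      intro k
      by_cases h : p k ≤ n <;> simp [ha, dSeq, h]
    have hmono : ∀ k l : Fin (m + 1), k ≤ l → a l ≤ a k := by
      intro k l hkl
      have hpl : p k ≤ p l := hp.monotone hkl
      by_cases h2 : p k ≤ n
      · by_cases h1 : p l ≤ n <;> simp [ha, dSeq, h1, h2]
      · have h1 : ¬ p l ≤ n := by omega
        simp [ha, dSeq, h1, h2]
    have hsq : ∀ i : Fin m, (a i.castSucc - a i.succ) ^ 2 = a i.castSucc - a i.succ := by
      intro i
      have hm : a i.succ ≤ a i.castSucc := hmono _ _ (Fin.castSucc_lt_succ : i.castSucc < i.succ).le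
      rcases ha01 i.castSucc with h1 | h1 <;> rcases ha01 i.succ with h2 | h2 <;>
        rw [h1, h2] at hm ⊢ <;> norm_num <;> linarith
    have htel : (∑ i : Fin m, (a i.castSucc - a i.succ) ^ 2) = a 0 - a (Fin.last m) := by
      rw [Finset.sum_congr rfl (fun i _ => hsq i)]
      exact fin_telescope a
    have hb : (a (Fin.last m) - a 0) ^ 2 ≤ 1 := by
      rcases ha01 (Fin.last m) with h1 | h1 <;> rcases ha01 0 with h2 | h2 <;>
        rw [h1, h2] <;> norm_num
    have h01 : a 0 ≤ 1 := by rcases ha01 0 with h | h <;> rw [h] <;> norm_num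
    have hlast0 : 0 ≤ a (Fin.last m) := by
      rcases ha01 (Fin.last m) with h | h <;> rw [h] <;> norm_num
    have hle2 : (∑ i : Fin m, (a i.castSucc - a i.succ) ^ 2)
        + (a (Fin.last m) - a 0) ^ 2 ≤ 2 := by
      rw [htel]; linarith
    calc Real.sqrt ((∑ i : Fin m, (dSeq n (p i.castSucc) - dSeq n (p i.succ)) ^ 2)
          + (dSeq n (p (Fin.last m)) - dSeq n (p 0)) ^ 2)
        = Real.sqrt ((∑ i : Fin m, (a i.castSucc - a i.succ) ^ 2)
          + (a (Fin.last m) - a 0) ^ 2) := rfl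
      _ ≤ Real.sqrt 2 := Real.sqrt_le_sqrt hle2
  unfold jamesNorm
  calc (Real.sqrt 2)⁻¹ * sSup (jamesSet (dSeq n))
      ≤ (Real.sqrt 2)⁻¹ * Real.sqrt 2 :=
        mul_le_mul_of_nonneg_left hsup (inv_nonneg.mpr h2.le)
    _ = 1 := inv_mul_cancel₀ h2.ne'

lemma jamesNorm_smul_le {x : ℕ → ℝ} (hbdd : BddAbove (jamesSet x)) {c : ℝ} (hc : 0 ≤ c) :
    jamesNorm (c • x) ≤ c * jamesNorm x := by
  have hsup : sSup (jamesSet (c • x)) ≤ c * sSup (jamesSet x) := by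
    apply csSup_le ⟨0, zero_mem_jamesSet _⟩
    rintro r ⟨m, p, hp, rfl⟩
    have hmem : Real.sqrt ((∑ i : Fin m, (x (p i.castSucc) - x (p i.succ)) ^ 2)
        + (x (p (Fin.last m)) - x (p 0)) ^ 2) ∈ jamesSet x := ⟨m, p, hp, rfl⟩
    have heq : (∑ i : Fin m, ((c • x) (p i.castSucc) - (c • x) (p i.succ)) ^ 2)
        + ((c • x) (p (Fin.last m)) - (c • x) (p 0)) ^ 2
        = c ^ 2 * ((∑ i : Fin m, (x (p i.castSucc) - x (p i.succ)) ^ 2)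
          + (x (p (Fin.last m)) - x (p 0)) ^ 2) := by
      simp only [Pi.smul_apply, smul_eq_mul]
      rw [mul_add, Finset.mul_sum]
      congr 1
      · exact Finset.sum_congr rfl fun i _ => by ring
      · ring
    rw [heq, Real.sqrt_mul (sq_nonneg c), Real.sqrt_sq hc]
    exact mul_le_mul_of_nonneg_left (le_csSup hbdd hmem) hc
  unfold jamesNorm
  calc (Real.sqrt 2)⁻¹ * sSup (jamesSet (c • x))
      ≤ (Real.sqrt 2)⁻¹ * (c * sSup (jamesSet x)) :=
        mul_le_mul_of_nonneg_left hsup (inv_nonneg.mpr (Real.sqrt_nonneg 2))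
    _ = c * ((Real.sqrt 2)⁻¹ * sSup (jamesSet x)) := by ring

/-- `‖π*(x*)‖_{L¹(μ)} = |x*|(d) ≤ B·‖x*‖_{J*}` for every functional `x*` on `J_K`. -/
theorem jPiStar_L1_norm
    (K : ℕ) (B : ℝ) (hB : 1 ≤ B)
    (ω : Fin (K + 1) → ℕ → ℝ) (γ : Fin (K + 1) → (ℕ → ℝ) →ₗ[ℝ] ℝ)
    (hω_supp : ∀ i, ∀ j, K < j → ω i j = 0)
    (hγ_supp : ∀ i, ∀ x : ℕ → ℝ, (∀ j, j ≤ K → x j = 0) → γ i x = 0)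
    (hbasis : ∀ x : ℕ → ℝ, (∀ j, K < j → x j = 0) → (∑ i, γ i x • ω i) = x)
    (hdual : ∀ i i' : Fin (K + 1), γ i (ω i') = if i = i' then 1 else 0)
    (hunc : ∀ (α ε : Fin (K + 1) → ℝ), (∀ i, ε i = 1 ∨ ε i = -1) →
      jamesNorm (∑ i, (ε i * α i) • ω i) ≤ B * jamesNorm (∑ i, α i • ω i))
    (hγd : ∀ i, 0 < γ i (dElt K ω γ)) (hdω : ∀ i, 0 < dStar K ω γ (ω i))
    (f : (ℕ → ℝ) →ₗ[ℝ] ℝ) :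
    (∫ i, |jPiStar K ω γ f i| ∂(jMeasure K ω γ)) =
      (∑ i, γ i (dElt K ω γ) * |f (ω i)|) ∧
    (∑ i, γ i (dElt K ω γ) * |f (ω i)|) ≤
      B * sSup {r : ℝ | ∃ x : ℕ → ℝ, (∀ j, K < j → x j = 0) ∧ jamesNorm x ≤ 1 ∧ r = |f x|} := by
  have hB0 : (0 : ℝ) < B := lt_of_lt_of_le one_pos hB
  set S := {r : ℝ | ∃ x : ℕ → ℝ, (∀ j, K < j → x j = 0) ∧ jamesNorm x ≤ 1 ∧ r = |f x|} with hS
  -- basic algebraic facts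
  have hγabs : ∀ (i : Fin (K + 1)) (x : ℕ → ℝ), γ i (absVec K ω γ x) = |γ i x| := by
    intro i x
    unfold absVec
    rw [map_sum]
    simp only [_root_.map_smul, smul_eq_mul, hdual]
    simp [mul_ite, mul_one, mul_zero, Finset.sum_ite_eq, Finset.mem_univ]
  have hγd_eq : ∀ i, γ i (dElt K ω γ)
      = ∑ j : Fin (K + 1), ((2 : ℝ) ^ ((j : ℕ) + 1))⁻¹ * |γ i (dSeq (j : ℕ))| := by
    intro i
    unfold dElt
    rw [map_sum]
    simp only [_root_.map_smul, smul_eq_mul, hγabs]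
  have hdsupp : ∀ j, K < j → dElt K ω γ j = 0 := by
    intro j hj
    unfold dElt absVec
    rw [Finset.sum_apply]
    apply Finset.sum_eq_zero
    intro j' _
    simp [Finset.sum_apply, hω_supp _ j hj]
  have hγω : ∀ (i : Fin (K + 1)) (c : Fin (K + 1) → ℝ), γ i (∑ i', c i' • ω i') = c i := by
    intro i c
    rw [map_sum]
    simp only [_root_.map_smul, smul_eq_mul, hdual]
    simp [mul_ite, mul_one, mul_zero, Finset.sum_ite_eq, Finset.mem_univ]
  have hdStar_lin : dStar K ω γ (dElt K ω γ)
      = ∑ i, γ i (dElt K ω γ) * dStar K ω γ (ω i) := by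
    have hrep : (∑ i, γ i (dElt K ω γ) • ω i) = dElt K ω γ := hbasis _ hdsupp
    conv_lhs => rw [← hrep]
    unfold dStar
    simp only [hγω, hdual]
    simp only [ite_mul, one_mul, zero_mul, Finset.sum_ite_eq', Finset.mem_univ, if_true]
    simp only [Finset.mul_sum]
    rw [Finset.sum_comm]
    apply Finset.sum_congr rfl
    intro i _
    apply Finset.sum_congr rfl
    intro j _
    ring
  have hdStar_pos : 0 < dStar K ω γ (dElt K ω γ) := by
    rw [hdStar_lin]
    exact Finset.sum_pos (fun i _ => mul_pos (hγd i) (hdω i)) Finset.univ_nonempty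
  -- Part 1
  have hμ : ∀ g : Fin (K + 1) → ℝ, (∫ i, g i ∂(jMeasure K ω γ))
      = ∑ i, (γ i (dElt K ω γ) * dStar K ω γ (ω i) / dStar K ω γ (dElt K ω γ)) * g i := by
    intro g
    unfold jMeasure
    rw [integral_finset_sum_measure ?_]
    · apply Finset.sum_congr rfl
      intro i _
      rw [integral_smul_measure, integral_dirac]
      rw [ENNReal.toReal_ofReal
        (div_nonneg (mul_nonneg (hγd i).le (hdω i).le) hdStar_pos.le)]
      rfl
    · intro i _
      have : IsFiniteMeasure
          ((ENNReal.ofReal (γ i (dElt K ω γ) * dStar K ω γ (ω i) / dStar K ω γ (dElt K ω γ)))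
            • Measure.dirac i) := by
        constructor
        rw [Measure.smul_apply, smul_eq_mul]
        exact ENNReal.mul_lt_top ENNReal.ofReal_lt_top (by simp)
      exact Integrable.of_finite
  have part1 : (∫ i, |jPiStar K ω γ f i| ∂(jMeasure K ω γ))
      = ∑ i, γ i (dElt K ω γ) * |f (ω i)| := by
    rw [hμ (fun i => |jPiStar K ω γ f i|)]
    apply Finset.sum_congr rfl
    intro i _
    have h1 : |jPiStar K ω γ f i|
        = (dStar K ω γ (dElt K ω γ) / dStar K ω γ (ω i)) * |f (ω i)| := by
      unfold jPiStar
      rw [abs_mul, abs_of_pos (div_pos hdStar_pos (hdω i))]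
    rw [h1]
    have hne1 : dStar K ω γ (ω i) ≠ 0 := (hdω i).ne'
    have hne2 : dStar K ω γ (dElt K ω γ) ≠ 0 := hdStar_pos.ne'
    field_simp
  refine ⟨part1, ?_⟩
  -- Part 2
  have hSbdd : BddAbove S := by
    refine ⟨∑ q ∈ Finset.range (K + 1), |f (fun j => if j = q then (1 : ℝ) else 0)|, ?_⟩
    rintro r ⟨x, hxsupp, hxnorm, rfl⟩
    have hjbdd := jamesSet_bddAbove hxsupp
    have h2 : (0 : ℝ) < Real.sqrt 2 := Real.sqrt_pos.mpr (by norm_num)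
    have hcoord : ∀ q, q ≤ K → |x q| ≤ 1 := by
      intro q hq
      have hpmono : StrictMono (fun k : Fin 2 => if k = 0 then q else K + 1) := by
        intro u v huv
        have hu2 := u.2
        have hv2 := v.2
        have huv' : (u : ℕ) < (v : ℕ) := huv
        have hu0 : u = 0 := by
          apply Fin.ext
          simp only [Fin.val_zero]
          omega
        have hv1 : v ≠ 0 := by
          intro h
          rw [h] at huv'
          simp at huv'
        rw [hu0]
        show (if (0 : Fin 2) = 0 then q else K + 1) < (if v = 0 then q else K + 1)
        rw [if_pos rfl, if_neg hv1]
        omega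
      have hmem : Real.sqrt 2 * |x q| ∈ jamesSet x := by
        refine ⟨1, fun k => if k = 0 then q else K + 1, hpmono, ?_⟩
        have hx0 : x (K + 1) = 0 := hxsupp (K + 1) (by omega)
        rw [Fin.sum_univ_one]
        norm_num [Fin.last]
        rw [hx0]
        rw [show (x q - 0) ^ 2 + (0 - x q) ^ 2 = 2 * x q ^ 2 by ring,
          Real.sqrt_mul (by norm_num), Real.sqrt_sq_eq_abs]
      have hle : Real.sqrt 2 * |x q| ≤ sSup (jamesSet x) := le_csSup hjbdd hmem
      have hs : sSup (jamesSet x) = Real.sqrt 2 * jamesNorm x := by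
        unfold jamesNorm
        field_simp
      rw [hs] at hle
      have : Real.sqrt 2 * |x q| ≤ Real.sqrt 2 * 1 := by
        calc Real.sqrt 2 * |x q| ≤ Real.sqrt 2 * jamesNorm x := hle
          _ ≤ Real.sqrt 2 * 1 := mul_le_mul_of_nonneg_left hxnorm h2.le
      exact le_of_mul_le_mul_left this h2
    have hxeq : x = ∑ q ∈ Finset.range (K + 1), x q • (fun j => if j = q then (1 : ℝ) else 0) := by
      funext j
      rw [Finset.sum_apply]
      by_cases hj : j ≤ K
      · rw [Finset.sum_eq_single_of_mem j (Finset.mem_range.mpr (by omega))]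
        · simp
        · intro q _ hqj
          simp [Ne.symm hqj, (show j ≠ q from fun h => hqj h.symm)]
      · rw [hxsupp j (by omega)]
        symm
        apply Finset.sum_eq_zero
        intro q hq
        have hjq : j ≠ q := by
          have := Finset.mem_range.mp hq
          omega
        simp [hjq]
    calc |f x| = |∑ q ∈ Finset.range (K + 1), x q * f (fun j => if j = q then (1 : ℝ) else 0)| := by
          conv_lhs => rw [hxeq]
          rw [map_sum]
          simp only [_root_.map_smul, smul_eq_mul]
      _ ≤ ∑ q ∈ Finset.range (K + 1), |x q * f (fun j => if j = q then (1 : ℝ) else 0)| :=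
          Finset.abs_sum_le_sum_abs _ _
      _ = ∑ q ∈ Finset.range (K + 1), |x q| * |f (fun j => if j = q then (1 : ℝ) else 0)| := by
          simp [abs_mul]
      _ ≤ ∑ q ∈ Finset.range (K + 1), 1 * |f (fun j => if j = q then (1 : ℝ) else 0)| := by
          apply Finset.sum_le_sum
          intro q hq
          have hq' : q ≤ K := by
            have := Finset.mem_range.mp hq
            omega
          exact mul_le_mul_of_nonneg_right (hcoord q hq') (abs_nonneg _)
      _ = ∑ q ∈ Finset.range (K + 1), |f (fun j => if j = q then (1 : ℝ) else 0)| := by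
          simp
  have hS0 : (0 : ℝ) ∈ S := by
    refine ⟨0, fun j _ => rfl, ?_, ?_⟩
    · rw [jamesNorm_zero]; norm_num
    · simp
  have hSnonneg : 0 ≤ sSup S := le_csSup hSbdd hS0
  have key : ∀ α : Fin (K + 1) → ℝ, jamesNorm (∑ i, α i • ω i) ≤ 1 →
      (∑ i, |α i| * |f (ω i)|) ≤ B * sSup S := by
    intro α hα
    set ε : Fin (K + 1) → ℝ :=
      fun i => (if 0 ≤ α i then (1 : ℝ) else -1) * (if 0 ≤ f (ω i) then 1 else -1) with hε
    have hεpm : ∀ i, ε i = 1 ∨ ε i = -1 := by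
      intro i
      by_cases h1 : 0 ≤ α i <;> by_cases h2 : 0 ≤ f (ω i) <;> simp [hε, h1, h2]
    set y : ℕ → ℝ := ∑ i, (ε i * α i) • ω i with hy
    have hyn : jamesNorm y ≤ B := by
      calc jamesNorm y ≤ B * jamesNorm (∑ i, α i • ω i) := hunc α ε hεpm
        _ ≤ B * 1 := mul_le_mul_of_nonneg_left hα hB0.le
        _ = B := mul_one B
    have hysupp : ∀ j, K < j → y j = 0 := by
      intro j hj
      rw [hy, Finset.sum_apply]
      apply Finset.sum_eq_zero
      intro i _
      simp [hω_supp i j hj]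
    have hxhat_supp : ∀ j, K < j → (B⁻¹ • y) j = 0 := by
      intro j hj
      simp [hysupp j hj]
    have hxhat_norm : jamesNorm (B⁻¹ • y) ≤ 1 := by
      calc jamesNorm (B⁻¹ • y) ≤ B⁻¹ * jamesNorm y :=
            jamesNorm_smul_le (jamesSet_bddAbove hysupp) (inv_nonneg.mpr hB0.le)
        _ ≤ B⁻¹ * B := mul_le_mul_of_nonneg_left hyn (inv_nonneg.mpr hB0.le)
        _ = 1 := inv_mul_cancel₀ hB0.ne'
    have hmemS : |f (B⁻¹ • y)| ∈ S := ⟨B⁻¹ • y, hxhat_supp, hxhat_norm, rfl⟩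
    have hfy : f y = ∑ i, |α i| * |f (ω i)| := by
      rw [hy, map_sum]
      simp only [_root_.map_smul, smul_eq_mul]
      apply Finset.sum_congr rfl
      intro i _
      rcases le_or_gt 0 (α i) with h1 | h1 <;> rcases le_or_gt 0 (f (ω i)) with h2 | h2
      · simp only [hε, if_pos h1, if_pos h2]
        rw [abs_of_nonneg h1, abs_of_nonneg h2]; ring
      · simp only [hε, if_pos h1, if_neg (not_le.mpr h2)]
        rw [abs_of_nonneg h1, abs_of_neg h2]; ring
      · simp only [hε, if_neg (not_le.mpr h1), if_pos h2]
        rw [abs_of_neg h1, abs_of_nonneg h2]; ring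
      · simp only [hε, if_neg (not_le.mpr h1), if_neg (not_le.mpr h2)]
        rw [abs_of_neg h1, abs_of_neg h2]; ring
    have hfxhat : f (B⁻¹ • y) = B⁻¹ * f y := by rw [_root_.map_smul, smul_eq_mul]
    calc (∑ i, |α i| * |f (ω i)|) = f y := hfy.symm
      _ = B * (B⁻¹ * f y) := by field_simp
      _ = B * f (B⁻¹ • y) := by rw [hfxhat]
      _ ≤ B * |f (B⁻¹ • y)| := mul_le_mul_of_nonneg_left (le_abs_self _) hB0.le
      _ ≤ B * sSup S := mul_le_mul_of_nonneg_left (le_csSup hSbdd hmemS) hB0.le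
  have hterm : ∀ j : Fin (K + 1),
      (∑ i, |γ i (dSeq (j : ℕ))| * |f (ω i)|) ≤ B * sSup S := by
    intro j
    apply key
    have hsupp : ∀ j', K < j' → dSeq (j : ℕ) j' = 0 := by
      intro j' hj'
      unfold dSeq
      rw [if_neg (by have := j.isLt; omega)]
    rw [hbasis _ hsupp]
    exact jamesNorm_dSeq_le _
  have hswap : (∑ i, γ i (dElt K ω γ) * |f (ω i)|)
      = ∑ j : Fin (K + 1), ((2 : ℝ) ^ ((j : ℕ) + 1))⁻¹
          * (∑ i, |γ i (dSeq (j : ℕ))| * |f (ω i)|) := by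
    simp only [hγd_eq, Finset.sum_mul]
    rw [Finset.sum_comm]
    apply Finset.sum_congr rfl
    intro j _
    rw [Finset.mul_sum]
    apply Finset.sum_congr rfl
    intro i _
    ring
  have hgeom : (∑ j : Fin (K + 1), ((2 : ℝ) ^ ((j : ℕ) + 1))⁻¹) ≤ 1 := by
    rw [Fin.sum_univ_eq_sum_range (fun j => ((2 : ℝ) ^ (j + 1))⁻¹)]
    have hval : ∀ n : ℕ, (∑ j ∈ Finset.range n, ((2 : ℝ) ^ (j + 1))⁻¹)
        = 1 - ((2 : ℝ) ^ n)⁻¹ := by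
      intro n
      induction n with
      | zero => simp
      | succ n ih =>
        rw [Finset.sum_range_succ, ih]
        have h2 : ((2 : ℝ) ^ (n + 1)) ≠ 0 := by positivity
        have h2' : ((2 : ℝ) ^ n) ≠ 0 := by positivity
        field_simp
        ring
    rw [hval]
    have : (0 : ℝ) ≤ ((2 : ℝ) ^ (K + 1))⁻¹ := by positivity
    linarith
  calc (∑ i, γ i (dElt K ω γ) * |f (ω i)|)
      = ∑ j : Fin (K + 1), ((2 : ℝ) ^ ((j : ℕ) + 1))⁻¹
          * (∑ i, |γ i (dSeq (j : ℕ))| * |f (ω i)|) := hswap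
    _ ≤ ∑ j : Fin (K + 1), ((2 : ℝ) ^ ((j : ℕ) + 1))⁻¹ * (B * sSup S) :=
        Finset.sum_le_sum fun j _ =>
          mul_le_mul_of_nonneg_left (hterm j) (by positivity)
    _ = (∑ j : Fin (K + 1), ((2 : ℝ) ^ ((j : ℕ) + 1))⁻¹) * (B * sSup S) :=
        (Finset.sum_mul _ _ _).symm
    _ ≤ 1 * (B * sSup S) :=
        mul_le_mul_of_nonneg_right hgeom (mul_nonneg hB0.le hSnonneg)
    _ = B * sSup S := one_mul _
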